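/- For the exponential fading model, the wideband-slope expression of the first user's confidential message simplifies as 2·(E[X])² / ((θ/log_e 2)·Var(X) + E[Y]) = 2 / ((θ/log_e 2)·(1 + 2γ) + 4γ + 2), where X = δ·(z1 − z2)·1{z1 ≥ z2} and Y = δ²·(z1² − z2²)·1{z1 ≥ z2}; in particular the value does not depend on δ. -/

import Mathlib

open MeasureTheory ProbabilityTheory Filter Set Real Polynomial
open scoped ENNReal NNReal

lemma tq (p q s c : ℝ) (hc : 0 < c) :
    Tendsto (fun x : ℝ => (p*x^2+q*x+s) * Real.exp (-(c*x))) atTop (nhds 0) := by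
  have h := (Polynomial.tendsto_div_exp_atTop
      (Polynomial.C (p/c^2) * Polynomial.X^2 + Polynomial.C (q/c) * Polynomial.X
        + Polynomial.C s)).comp (tendsto_id.const_mul_atTop hc)
  refine h.congr fun x => ?_
  have hne : Real.exp (c * x) ≠ 0 := (Real.exp_pos _).ne'
  simp only [Function.comp_apply, eval_add, eval_mul, eval_pow, eval_C, eval_X, id_eq]
  rw [Real.exp_neg]
  field_simp

lemma iq (p q s c a : ℝ) (hc : 0 < c) :
    IntegrableOn (fun x : ℝ => (p*x^2+q*x+s) * Real.exp (-(c*x))) (Ioi a) := by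
  refine integrable_of_isBigO_exp_neg (half_pos hc) (by fun_prop) ?_
  refine Asymptotics.IsLittleO.isBigO ?_
  rw [Asymptotics.isLittleO_iff_tendsto (fun x hx => absurd hx (Real.exp_ne_zero _))]
  have := tq p q s (c/2) (half_pos hc)
  refine this.congr fun x => ?_
  have h : Real.exp (-(c*x)) = Real.exp (-(c/2*x)) * Real.exp (-(c/2*x)) := by
    rw [← Real.exp_add]; ring_nf
  rw [h, show (-(c/2)*x : ℝ) = -(c/2*x) from by ring, mul_div_assoc,
    mul_div_cancel_right₀ _ (Real.exp_ne_zero _)]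

lemma Iq (p q s c a : ℝ) (hc : 0 < c) :
    ∫ x in Ioi a, (p*x^2+q*x+s) * Real.exp (-(c*x))
      = ((p*a^2+q*a+s)/c + (2*p*a+q)/c^2 + 2*p/c^3) * Real.exp (-(c*a)) := by
  have hc' : c ≠ 0 := hc.ne'
  have hderiv : ∀ x ∈ Ici a, HasDerivAt
      (fun x : ℝ => -((p*x^2+q*x+s)/c + (2*p*x+q)/c^2 + 2*p/c^3) * Real.exp (-(c*x)))
      ((p*x^2+q*x+s) * Real.exp (-(c*x))) x := by
    intro x _
    have h1 : HasDerivAt (fun x : ℝ => p*x^2+q*x+s) (2*p*x+q) x := by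
      have := (((hasDerivAt_pow 2 x).const_mul p).add ((hasDerivAt_id x).const_mul q)).add_const s
      refine this.congr_deriv ?_
      push_cast
      ring
    have h2 : HasDerivAt (fun x : ℝ => 2*p*x+q) (2*p) x := by
      simpa using ((hasDerivAt_id x).const_mul (2*p)).add_const q
    have hpoly : HasDerivAt
        (fun x : ℝ => -((p*x^2+q*x+s)/c + (2*p*x+q)/c^2 + 2*p/c^3))
        (-((2*p*x+q)/c + (2*p)/c^2)) x := by
      exact (((h1.div_const c).add (h2.div_const (c^2))).add_const (2*p/c^3)).neg
    have hexp : HasDerivAt (fun x : ℝ => Real.exp (-(c*x))) (-c * Real.exp (-(c*x))) x := by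
      have := ((hasDerivAt_id x).const_mul (-c)).exp
      simpa [neg_mul, mul_comm] using this
    have := hpoly.mul hexp
    refine this.congr_deriv ?_
    field_simp
    ring
  have htend : Tendsto
      (fun x : ℝ => -((p*x^2+q*x+s)/c + (2*p*x+q)/c^2 + 2*p/c^3) * Real.exp (-(c*x)))
      atTop (nhds 0) := by
    have := tq (-(p/c)) (-(q/c) - 2*p/c^2) (-(s/c) - q/c^2 - 2*p/c^3) c hc
    refine this.congr fun x => ?_
    field_simp
    ring
  have := MeasureTheory.integral_Ioi_of_hasDerivAt_of_tendsto' hderiv (iq p q s c a hc) htend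
  rw [this]
  field_simp
  ring

lemma pdfReal_eq (r x : ℝ) :
    exponentialPDFReal r x = if 0 ≤ x then r * Real.exp (-(r * x)) else 0 := by
  rw [exponentialPDFReal, gammaPDFReal]
  simp only [rpow_one, Real.Gamma_one, div_one, sub_self, rpow_zero, mul_one]

lemma integral_expM (r : ℝ) (hr : 0 < r) (g : ℝ → ℝ) :
    ∫ x, g x ∂(expMeasure r) = ∫ x in Ioi 0, g x * (r * Real.exp (-(r*x))) := by
  have hm : expMeasure r
      = volume.withDensity (fun x => ((exponentialPDFReal r x).toNNReal : ℝ≥0∞)) := rfl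
  rw [hm, integral_withDensity_eq_integral_smul (measurable_exponentialPDFReal r).real_toNNReal]
  have h1 : (fun x => (exponentialPDFReal r x).toNNReal • g x)
      = fun x => (if 0 ≤ x then r * Real.exp (-(r*x)) else 0) * g x := by
    funext x
    rw [NNReal.smul_def, Real.coe_toNNReal _ (exponentialPDFReal_nonneg hr x), pdfReal_eq, smul_eq_mul]
  rw [h1]
  rw [← setIntegral_eq_integral_of_forall_compl_eq_zero
    (s := Ici (0:ℝ)) (fun x hx => by rw [if_neg (by simpa using hx), zero_mul])]
  rw [integral_Ici_eq_integral_Ioi]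
  refine setIntegral_congr_fun measurableSet_Ioi fun x hx => ?_
  rw [if_pos (le_of_lt hx), mul_comm]

lemma integrable_expM (r : ℝ) (hr : 0 < r) (g : ℝ → ℝ) (hg : Measurable g)
    (p q s : ℝ) (hb : ∀ x, 0 ≤ x → |g x| ≤ p*x^2+q*x+s) : Integrable g (expMeasure r) := by
  have hm : expMeasure r = volume.withDensity (exponentialPDF r) := rfl
  have hpdfm : Measurable (exponentialPDF r) := (measurable_exponentialPDFReal r).ennreal_ofReal
  rw [hm, integrable_withDensity_iff hpdfm
    (Eventually.of_forall fun x => ENNReal.ofReal_lt_top)]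
  have key : ∀ x : ℝ, (exponentialPDF r x).toReal
      = if 0 ≤ x then r * Real.exp (-(r*x)) else 0 := fun x => by
    rw [exponentialPDF, ENNReal.toReal_ofReal (exponentialPDFReal_nonneg hr x), pdfReal_eq]
  have hFm : AEStronglyMeasurable (fun x => g x * (exponentialPDF r x).toReal) volume :=
    (hg.mul hpdfm.ennreal_toReal).aestronglyMeasurable
  rw [← integrableOn_univ, ← Set.Iio_union_Ici (a := (0:ℝ))]
  refine IntegrableOn.union ?_ ?_
  · refine IntegrableOn.congr_fun (integrableOn_zero) (fun x hx => ?_) measurableSet_Iio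
    rw [key x, if_neg (not_le.mpr hx), mul_zero]
  · rw [integrableOn_Ici_iff_integrableOn_Ioi]
    refine Integrable.mono' ((iq p q s r 0 hr).const_mul r) hFm.restrict ?_
    refine (ae_restrict_iff' measurableSet_Ioi).mpr (Eventually.of_forall fun x hx => ?_)
    have hx0 : (0:ℝ) ≤ x := le_of_lt hx
    rw [Real.norm_eq_abs, key x, if_pos hx0, abs_mul,
      abs_of_nonneg (by positivity : (0:ℝ) ≤ r * Real.exp (-(r*x)))]
    have h2 := mul_le_mul_of_nonneg_right (hb x hx0) (by positivity : (0:ℝ) ≤ r * Real.exp (-(r*x)))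
    calc |g x| * (r * Real.exp (-(r*x))) ≤ (p*x^2+q*x+s) * (r * Real.exp (-(r*x))) := h2
    _ = r * ((p*x^2+q*x+s) * Real.exp (-(r*x))) := by ring

lemma inner_eq (y p q s : ℝ) (hy : 0 ≤ y) (h0 : p*y^2+q*y+s = 0) :
    ∫ x, (if y ≤ x then p*x^2+q*x+s else 0) ∂(expMeasure 1)
      = (2*p*y+q+2*p) * Real.exp (-y) := by
  rw [integral_expM 1 one_pos]
  have h1 : EqOn (fun x => (if y ≤ x then p*x^2+q*x+s else 0) * (1 * Real.exp (-(1*x))))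
      ((Ioi y).indicator (fun x => (p*x^2+q*x+s) * Real.exp (-(1*x)))) (Ioi (0:ℝ)) := by
    intro x _
    simp only [indicator_apply, mem_Ioi]
    by_cases h : y < x
    · rw [if_pos h, if_pos h.le, one_mul]
    · rw [if_neg h]
      by_cases h2 : y ≤ x
      · have hxy : x = y := le_antisymm (not_lt.mp h) h2
        simp only [hxy, h0, if_true, le_refl, zero_mul, ite_self]
      · rw [if_neg h2, zero_mul]
  rw [setIntegral_congr_fun measurableSet_Ioi h1, setIntegral_indicator measurableSet_Ioi,
    Set.Ioi_inter_Ioi, max_eq_right hy, Iq p q s 1 y one_pos]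
  norm_num [h0]

lemma inner_norm_eq (y p q s : ℝ) (hy : 0 ≤ y) (h0 : p*y^2+q*y+s = 0)
    (hnn : ∀ x, y ≤ x → 0 ≤ p*x^2+q*x+s) :
    ∫ x, ‖if y ≤ x then p*x^2+q*x+s else 0‖ ∂(expMeasure 1)
      = (2*p*y+q+2*p) * Real.exp (-y) := by
  rw [← inner_eq y p q s hy h0]
  congr 1
  funext x
  rw [Real.norm_eq_abs]
  split_ifs with h
  · exact abs_of_nonneg (hnn x h)
  · exact abs_zero

lemma slice_meas (y p q s : ℝ) : Measurable (fun x : ℝ => if y ≤ x then p*x^2+q*x+s else 0) := by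
  refine Measurable.ite ?_ (by fun_prop) measurable_const
  exact measurableSet_Ici

lemma slice_int (y p q s : ℝ) : Integrable (fun x => if y ≤ x then p*x^2+q*x+s else 0)
    (expMeasure 1) := by
  refine integrable_expM 1 one_pos _ (slice_meas y p q s) |p| |q| |s| fun x hx => ?_
  split_ifs with h
  · calc |p*x^2+q*x+s| ≤ |p*x^2| + |q*x| + |s| := abs_add_three _ _ _
    _ = (|p|)*x^2 + (|q|)*x + (|s|) := by
        rw [abs_mul, abs_mul, abs_pow, abs_of_nonneg hx]
  · simp only [abs_zero]
    positivity

lemma outer_integrable (γ a b : ℝ) (hγ : 0 < γ) (ha : 0 ≤ a) (hb : 0 ≤ b) :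
    Integrable (fun y => (a*y+b) * Real.exp (-y)) (expMeasure γ⁻¹) := by
  refine integrable_expM γ⁻¹ (inv_pos.mpr hγ) _ (by fun_prop) 0 a b fun y hy => ?_
  have h1 : (0:ℝ) ≤ a*y+b := by positivity
  rw [abs_mul, abs_of_nonneg h1, abs_of_nonneg (Real.exp_pos _).le]
  have h2 : Real.exp (-y) ≤ 1 := Real.exp_le_one_iff.mpr (by linarith)
  nlinarith

lemma outer_int (γ a b : ℝ) (hγ : 0 < γ) :
    ∫ y, (a*y + b) * Real.exp (-y) ∂(expMeasure γ⁻¹)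
      = γ⁻¹ * (b/(1+γ⁻¹) + a/(1+γ⁻¹)^2) := by
  rw [integral_expM γ⁻¹ (inv_pos.mpr hγ)]
  have hc : (0:ℝ) < 1 + γ⁻¹ := by positivity
  have h1 : EqOn (fun y => ((a*y + b) * Real.exp (-y)) * (γ⁻¹ * Real.exp (-(γ⁻¹*y))))
      (fun y => ((0:ℝ)*y^2 + (γ⁻¹*a)*y + γ⁻¹*b) * Real.exp (-((1+γ⁻¹)*y))) (Ioi 0) := by
    intro y _
    simp only
    rw [show (-((1+γ⁻¹)*y) : ℝ) = -y + -(γ⁻¹*y) by ring, Real.exp_add]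
    ring
  rw [setIntegral_congr_fun measurableSet_Ioi h1, Iq _ _ _ _ _ hc]
  have hcne : (1+γ⁻¹ : ℝ) ≠ 0 := hc.ne'
  norm_num
  field_simp

lemma key_int {Ω : Type*} [MeasurableSpace Ω] (μ : Measure Ω) [IsProbabilityMeasure μ]
    (z1 z2 : Ω → ℝ) (hz1m : Measurable z1) (hz2m : Measurable z2)
    (γ : ℝ) (hγ : 0 < γ)
    (hmap : μ.map (fun ω => (z1 ω, z2 ω)) = (expMeasure 1).prod (expMeasure γ⁻¹))
    (P Q S : ℝ → ℝ) (hP : Measurable P) (hQ : Measurable Q) (hS : Measurable S)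
    (h0 : ∀ y, 0 ≤ y → P y * y^2 + Q y * y + S y = 0)
    (hnn : ∀ y, 0 ≤ y → ∀ x, y ≤ x → 0 ≤ P y * x^2 + Q y * x + S y)
    (hOuter : Integrable (fun y => (2 * P y * y + Q y + 2 * P y) * Real.exp (-y))
      (expMeasure γ⁻¹)) :
    ∫ ω, (if z2 ω ≤ z1 ω then P (z2 ω) * (z1 ω)^2 + Q (z2 ω) * (z1 ω) + S (z2 ω) else 0) ∂μ
      = ∫ y, (2 * P y * y + Q y + 2 * P y) * Real.exp (-y) ∂(expMeasure γ⁻¹) := by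
  haveI hprob1 : IsProbabilityMeasure (expMeasure (1:ℝ)) := isProbabilityMeasure_expMeasure one_pos
  haveI hprob2 : IsProbabilityMeasure (expMeasure γ⁻¹) :=
    isProbabilityMeasure_expMeasure (inv_pos.mpr hγ)
  set g : ℝ × ℝ → ℝ :=
    fun pr => if pr.2 ≤ pr.1 then P pr.2 * pr.1^2 + Q pr.2 * pr.1 + S pr.2 else 0 with hg
  have hgm : Measurable g := by
    refine Measurable.ite (measurableSet_le measurable_snd measurable_fst) ?_ measurable_const
    fun_prop
  have ae0 : ∀ᵐ y ∂(expMeasure γ⁻¹), 0 ≤ y := by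
    rw [ae_iff]
    have hset : {y : ℝ | ¬ 0 ≤ y} = Iio 0 := by ext y; simp [not_le]
    rw [hset]
    show (volume.withDensity (exponentialPDF γ⁻¹)) (Iio 0) = 0
    rw [withDensity_apply _ measurableSet_Iio]
    exact lintegral_exponentialPDF_of_nonpos le_rfl
  have hint : Integrable g ((expMeasure 1).prod (expMeasure γ⁻¹)) := by
    refine (integrable_prod_iff' hgm.aestronglyMeasurable).mpr ⟨?_, ?_⟩
    · filter_upwards [ae0] with y hy
      exact slice_int y (P y) (Q y) (S y)
    · refine hOuter.congr ?_
      filter_upwards [ae0] with y hy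
      exact (inner_norm_eq y (P y) (Q y) (S y) hy (h0 y hy) (hnn y hy)).symm
  have step1 : ∫ ω, g (z1 ω, z2 ω) ∂μ = ∫ p, g p ∂((expMeasure 1).prod (expMeasure γ⁻¹)) := by
    rw [← hmap]
    exact (integral_map (hz1m.prodMk hz2m).aemeasurable hgm.aestronglyMeasurable).symm
  have step2 := MeasureTheory.integral_prod_symm g hint
  have step3 : ∫ y, (∫ x, g (x, y) ∂(expMeasure 1)) ∂(expMeasure γ⁻¹)
      = ∫ y, (2 * P y * y + Q y + 2 * P y) * Real.exp (-y) ∂(expMeasure γ⁻¹) := by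
    refine integral_congr_ae ?_
    filter_upwards [ae0] with y hy
    exact inner_eq y (P y) (Q y) (S y) hy (h0 y hy)
  calc ∫ ω, (if z2 ω ≤ z1 ω then P (z2 ω) * (z1 ω)^2 + Q (z2 ω) * (z1 ω) + S (z2 ω) else 0) ∂μ
      = ∫ ω, g (z1 ω, z2 ω) ∂μ := rfl
    _ = _ := by rw [step1, step2, step3]

theorem wideband_slope_exponential_fading_user1
    {Ω : Type*} [MeasurableSpace Ω] (μ : Measure Ω) [IsProbabilityMeasure μ]
    (z1 z2 : Ω → ℝ) (hz1m : Measurable z1) (hz2m : Measurable z2)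
    (hindep : IndepFun z1 z2 μ)
    (γ : ℝ) (hγ : 0 < γ)
    (hz1law : μ.map z1 = expMeasure 1)
    (hz2law : μ.map z2 = expMeasure γ⁻¹)
    (θ δ : ℝ) (hθ : 0 < θ) (hδ0 : 0 < δ) (hδ1 : δ ≤ 1)
    (X Y : Ω → ℝ)
    (hX : ∀ ω, X ω = if z2 ω ≤ z1 ω then δ * (z1 ω - z2 ω) else 0)
    (hY : ∀ ω, Y ω = if z2 ω ≤ z1 ω then δ ^ 2 * ((z1 ω) ^ 2 - (z2 ω) ^ 2) else 0)
    (VarX : ℝ) (hVarX : VarX = (∫ ω, (X ω) ^ 2 ∂μ) - (∫ ω, X ω ∂μ) ^ 2) :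
    2 * (∫ ω, X ω ∂μ) ^ 2 / ((θ / Real.log 2) * VarX + ∫ ω, Y ω ∂μ)
      = 2 / ((θ / Real.log 2) * (1 + 2 * γ) + 4 * γ + 2) := by
  have hmap : μ.map (fun ω => (z1 ω, z2 ω)) = (expMeasure 1).prod (expMeasure γ⁻¹) := by
    rw [← hz1law, ← hz2law]
    exact (indepFun_iff_map_prod_eq_prod_map_map hz1m.aemeasurable hz2m.aemeasurable).mp hindep
  have hγ1 : (0:ℝ) < 1 + γ := by linarith
  have hγ1' : (1+γ:ℝ) ≠ 0 := hγ1.ne'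
  -- E[X]
  have hEX : ∫ ω, X ω ∂μ = δ * (1 / (1+γ)) := by
    have e1 := key_int μ z1 z2 hz1m hz2m γ hγ hmap (fun _ => 0) (fun _ => 1) (fun t => -t)
      (by fun_prop) (by fun_prop) (by fun_prop)
      (fun y hy => by ring) (fun y hy x hx => by nlinarith)
      (by
        have := outer_integrable γ 0 1 hγ le_rfl zero_le_one
        refine this.congr (ae_of_all _ fun y => by ring_nf))
    have e2 : ∫ ω, X ω ∂μ = δ * ∫ ω,
        (if z2 ω ≤ z1 ω then (0:ℝ) * (z1 ω)^2 + 1 * (z1 ω) + -(z2 ω) else 0) ∂μ := by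
      rw [← integral_const_mul]
      refine integral_congr_ae (ae_of_all _ fun ω => ?_)
      beta_reduce
      rw [hX ω]
      by_cases h : z2 ω ≤ z1 ω
      · rw [if_pos h, if_pos h]; ring
      · rw [if_neg h, if_neg h]; ring
    rw [e2, e1]
    have e3 : ∫ y, (2 * (0:ℝ) * y + 1 + 2 * 0) * Real.exp (-y) ∂(expMeasure γ⁻¹)
        = γ⁻¹ * (1/(1+γ⁻¹) + 0/(1+γ⁻¹)^2) := by
      rw [← outer_int γ 0 1 hγ]
      refine integral_congr_ae (ae_of_all _ fun y => by ring_nf)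
    rw [e3]
    have h2 : (1+γ⁻¹:ℝ) ≠ 0 := by positivity
    field_simp
    try ring
    try exact Or.inl (by ring)
  -- E[X^2]
  have hEX2 : ∫ ω, (X ω)^2 ∂μ = δ^2 * (2 / (1+γ)) := by
    have e1 := key_int μ z1 z2 hz1m hz2m γ hγ hmap (fun _ => 1) (fun t => -(2*t)) (fun t => t^2)
      (by fun_prop) (by fun_prop) (by fun_prop)
      (fun y hy => by ring) (fun y hy x hx => by nlinarith [sq_nonneg (x - y)])
      (by
        have := outer_integrable γ 0 2 hγ le_rfl zero_le_two
        refine this.congr (ae_of_all _ fun y => by ring_nf))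
    have e2 : ∫ ω, (X ω)^2 ∂μ = δ^2 * ∫ ω,
        (if z2 ω ≤ z1 ω then (1:ℝ) * (z1 ω)^2 + -(2*(z2 ω)) * (z1 ω) + (z2 ω)^2 else 0) ∂μ := by
      rw [← integral_const_mul]
      refine integral_congr_ae (ae_of_all _ fun ω => ?_)
      beta_reduce
      rw [hX ω]
      by_cases h : z2 ω ≤ z1 ω
      · rw [if_pos h, if_pos h]; ring
      · rw [if_neg h, if_neg h]; ring
    rw [e2, e1]
    have e3 : ∫ y, (2 * (1:ℝ) * y + -(2*y) + 2 * 1) * Real.exp (-y) ∂(expMeasure γ⁻¹)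
        = γ⁻¹ * (2/(1+γ⁻¹) + 0/(1+γ⁻¹)^2) := by
      rw [← outer_int γ 0 2 hγ]
      refine integral_congr_ae (ae_of_all _ fun y => by ring_nf)
    rw [e3]
    have h2 : (1+γ⁻¹:ℝ) ≠ 0 := by positivity
    field_simp
    try ring
    try exact Or.inl (by ring)
  -- E[Y]
  have hEY : ∫ ω, Y ω ∂μ = δ^2 * ((4*γ+2) / (1+γ)^2) := by
    have e1 := key_int μ z1 z2 hz1m hz2m γ hγ hmap (fun _ => 1) (fun _ => 0) (fun t => -(t^2))
      (by fun_prop) (by fun_prop) (by fun_prop)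
      (fun y hy => by ring) (fun y hy x hx => by nlinarith)
      (by
        have := outer_integrable γ 2 2 hγ zero_le_two zero_le_two
        refine this.congr (ae_of_all _ fun y => by ring_nf))
    have e2 : ∫ ω, Y ω ∂μ = δ^2 * ∫ ω,
        (if z2 ω ≤ z1 ω then (1:ℝ) * (z1 ω)^2 + (0:ℝ) * (z1 ω) + -((z2 ω)^2) else 0) ∂μ := by
      rw [← integral_const_mul]
      refine integral_congr_ae (ae_of_all _ fun ω => ?_)
      beta_reduce
      rw [hY ω]
      by_cases h : z2 ω ≤ z1 ω
      · rw [if_pos h, if_pos h]; ring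
      · rw [if_neg h, if_neg h]; ring
    rw [e2, e1]
    have e3 : ∫ y, (2 * (1:ℝ) * y + 0 + 2 * 1) * Real.exp (-y) ∂(expMeasure γ⁻¹)
        = γ⁻¹ * (2/(1+γ⁻¹) + 2/(1+γ⁻¹)^2) := by
      rw [← outer_int γ 2 2 hγ]
      refine integral_congr_ae (ae_of_all _ fun y => by ring_nf)
    rw [e3]
    have h2 : (1+γ⁻¹:ℝ) ≠ 0 := by positivity
    field_simp
    try ring
    try exact Or.inl (by ring)
  -- final arithmetic
  set T := θ / Real.log 2 with hT
  have hTpos : 0 < T := div_pos hθ (Real.log_pos one_lt_two)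
  have hDpos : 0 < T * (1 + 2*γ) + 4*γ + 2 := by nlinarith
  have hVar : VarX = δ^2 * ((1 + 2*γ) / (1+γ)^2) := by
    rw [hVarX, hEX2, hEX]
    field_simp
    ring
  rw [hEX, hEY, hVar]
  have hLpos : 0 < T * (δ^2 * ((1 + 2*γ) / (1+γ)^2)) + δ^2 * ((4*γ+2)/(1+γ)^2) := by
    have h1 : 0 < δ^2 / (1+γ)^2 := by positivity
    have : T * (δ^2 * ((1 + 2*γ) / (1+γ)^2)) + δ^2 * ((4*γ+2)/(1+γ)^2)
        = (δ^2 / (1+γ)^2) * (T * (1 + 2*γ) + 4*γ + 2) := by field_simp; ring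
    rw [this]
    exact mul_pos h1 hDpos
  rw [div_eq_div_iff hLpos.ne' hDpos.ne']
  field_simp
  ring
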